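/- Let N : ℕ and ρ : Fin N → ℂ with ρ ≠ 0 and ξ(ρ) < 1. Then the potential equals the modulus square of the Hermitian projection: Φ(ρ) = ‖P_h(ρ)‖². (Toy-model form of Proposition 3, item 3, equation (PhiIsModSqu): the potential is the pullback of the Kähler potential ‖λ‖² along the projection P_h.) -/

import Mathlib

noncomputable section

open scoped BigOperators

namespace PureSpinorToy

variable {N : ℕ}

/-- Complex bilinear pairing `B(ρ,σ) = ∑ I, ρ_I σ_I`. -/
def B (ρ σ : Fin N → ℂ) : ℂ := ∑ I, ρ I * σ I

/-- Hermitian inner product `⟪ρ,σ⟫ = ∑ I, conj(ρ_I) σ_I`. -/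
def hInner (ρ σ : Fin N → ℂ) : ℂ := ∑ I, (starRingEnd ℂ) (ρ I) * σ I

/-- Norm square `‖ρ‖² = ⟪ρ,ρ⟫` (a nonnegative real). -/
def nsq (ρ : Fin N → ℂ) : ℝ := (hInner ρ ρ).re

/-- Componentwise complex conjugation `ρ̄`. -/
def conjFun (ρ : Fin N → ℂ) : Fin N → ℂ := fun I => (starRingEnd ℂ) (ρ I)

/-- `ζ(ρ) = B(ρ,ρ)/‖ρ‖²`. -/
def zeta (ρ : Fin N → ℂ) : ℂ := B ρ ρ / (nsq ρ : ℂ)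

/-- `ξ(ρ) = |ζ(ρ)|²`. -/
def xi (ρ : Fin N → ℂ) : ℝ := Complex.normSq (zeta ρ)

/-- The family of projection maps
`P_f(ρ) = f(ξ(ρ)) • (ρ − (ζ(ρ)/(1+√(1−ξ(ρ)))) • ρ̄)`. -/
def P (f : ℝ → ℂ) (ρ : Fin N → ℂ) : Fin N → ℂ :=
  f (xi ρ) • (ρ - (zeta ρ / (1 + (Real.sqrt (1 - xi ρ) : ℂ))) • conjFun ρ)

/-- The special function `h(t) = (1+√(1−t))/(2√(1−t))`. -/
def h (t : ℝ) : ℂ := (((1 + Real.sqrt (1 - t)) / (2 * Real.sqrt (1 - t)) : ℝ) : ℂ)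

/-- The potential `Φ(ρ) = (‖ρ‖²/2)(1+√(1−ξ(ρ)))`. -/
def Phi (ρ : Fin N → ℂ) : ℝ := (nsq ρ / 2) * (1 + Real.sqrt (1 - xi ρ))

lemma hInner_self (ρ : Fin N → ℂ) : hInner ρ ρ = ((nsq ρ : ℝ) : ℂ) := by
  have : hInner ρ ρ = ((∑ I, Complex.normSq (ρ I) : ℝ) : ℂ) := by
    simp [hInner, ← Complex.normSq_eq_conj_mul_self]
  rw [nsq, this]
  simp

lemma nsq_eq_sum (ρ : Fin N → ℂ) : nsq ρ = ∑ I, Complex.normSq (ρ I) := by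
  have h1 : hInner ρ ρ = ((∑ I, Complex.normSq (ρ I) : ℝ) : ℂ) := by
    simp [hInner, ← Complex.normSq_eq_conj_mul_self]
  rw [nsq, h1, Complex.ofReal_re]

lemma nsq_pos (ρ : Fin N → ℂ) (hρ : ρ ≠ 0) : 0 < nsq ρ := by
  obtain ⟨I, hI⟩ : ∃ I, ρ I ≠ 0 := by
    by_contra hc
    push_neg at hc
    exact hρ (funext hc)
  rw [nsq_eq_sum]
  exact Finset.sum_pos' (fun i _ => Complex.normSq_nonneg _)
    ⟨I, Finset.mem_univ I, Complex.normSq_pos.mpr hI⟩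

lemma hInner_conj_right (ρ : Fin N → ℂ) :
    hInner ρ (conjFun ρ) = (starRingEnd ℂ) (B ρ ρ) := by
  simp [hInner, conjFun, B, map_sum, map_mul]

lemma hInner_conj_left (ρ : Fin N → ℂ) : hInner (conjFun ρ) ρ = B ρ ρ := by
  simp [hInner, conjFun, B]

lemma hInner_conj_conj (ρ : Fin N → ℂ) :
    hInner (conjFun ρ) (conjFun ρ) = ((nsq ρ : ℝ) : ℂ) := by
  have : hInner (conjFun ρ) (conjFun ρ) = hInner ρ ρ := by
    simp [hInner, conjFun, mul_comm]
  rw [this, hInner_self]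

lemma hInner_P_expand (f : ℝ → ℂ) (ρ : Fin N → ℂ) :
    hInner (P f ρ) (P f ρ) =
      (starRingEnd ℂ) (f (xi ρ)) * f (xi ρ) *
        (hInner ρ ρ
          - (zeta ρ / (1 + (Real.sqrt (1 - xi ρ) : ℂ))) * hInner ρ (conjFun ρ)
          - (starRingEnd ℂ) (zeta ρ / (1 + (Real.sqrt (1 - xi ρ) : ℂ))) * hInner (conjFun ρ) ρ
          + (starRingEnd ℂ) (zeta ρ / (1 + (Real.sqrt (1 - xi ρ) : ℂ)))
              * (zeta ρ / (1 + (Real.sqrt (1 - xi ρ) : ℂ))) * hInner (conjFun ρ) (conjFun ρ)) := by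
  simp only [hInner, P, Pi.smul_apply, Pi.sub_apply, smul_eq_mul, map_mul, map_sub,
    Finset.mul_sum, ← Finset.sum_sub_distrib, ← Finset.sum_add_distrib]
  refine Finset.sum_congr rfl fun I _ => ?_
  ring

/-- Toy model, Proposition 3 item 3 (PhiIsModSqu): the potential equals the modulus
square of the Hermitian projection. -/
theorem statement9 {N : ℕ} (ρ : Fin N → ℂ) (hρ : ρ ≠ 0) (hξ : xi ρ < 1) :
    Phi ρ = nsq (P h ρ) := by
  have hn : (0:ℝ) < nsq ρ := nsq_pos ρ hρ
  set s : ℝ := Real.sqrt (1 - xi ρ) with hs_def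
  have hs : 0 < s := Real.sqrt_pos.mpr (by linarith)
  have hs2 : s ^ 2 = 1 - xi ρ := Real.sq_sqrt (by linarith)
  have hnne : ((nsq ρ : ℝ) : ℂ) ≠ 0 := by exact_mod_cast hn.ne'
  have hB : B ρ ρ = zeta ρ * (nsq ρ : ℂ) := by
    rw [zeta, div_mul_cancel₀ _ hnne]
  have hzz : (starRingEnd ℂ) (zeta ρ) * zeta ρ = ((xi ρ : ℝ) : ℂ) := by
    rw [xi, ← Complex.normSq_eq_conj_mul_self]
  have key : hInner (P h ρ) (P h ρ) = ((Phi ρ : ℝ) : ℂ) := by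
    rw [hInner_P_expand, hInner_self, hInner_conj_right, hInner_conj_left, hInner_conj_conj,
      hB]
    simp only [h, Phi, map_mul, map_div₀, Complex.conj_ofReal, map_add, map_one]
    have h1s : (1:ℂ) + (s:ℂ) ≠ 0 := by
      have : (0:ℝ) < 1 + s := by linarith
      intro hc
      have := congrArg Complex.re hc
      simp at this
      linarith
    have hsne : (s:ℂ) ≠ 0 := by
      exact_mod_cast hs.ne'
    have hxi : ((xi ρ : ℝ) : ℂ) = 1 - (s:ℂ)^2 := by
      have hx : xi ρ = 1 - s^2 := by linarith
      rw [hx]; push_cast; ring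
    push_cast
    rw [← hs_def]
    field_simp
    linear_combination (-1-2*(s:ℂ)) * hzz + (-1-2*(s:ℂ)) * hxi
  rw [nsq, key]
  simp
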